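/- Let f_i : ℝ → ℝ be the indicator-type function taking the constant value φ_i ≥ 0 on an interval I_i of length ℓ_i and 0 elsewhere (i = 1,...,n), let f(x_1,...,x_n) = ∏_{i=1}^n f_i(x_i), and let A ∈ {-1,0,1}^{n×n} be invertible. Then for any k ∈ {1,...,n-1}, ∫_{y∈ℝ^{n-k}} max_{z∈ℝ^k} f(A⁻¹·(y,z)) dy ≤ 2^k · (n-k)! · (∏_{i=1}^n φ_i) · Σ_I ∏_{i∉I} ℓ_i, where the sum runs over all k-element subsets I ⊆ {1,...,n}. -/

import Mathlib

open MeasureTheory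

open Finset Pointwise

section helpers

lemma abs_det_le_factorial {m : ℕ} (N : Matrix (Fin m) (Fin m) ℝ)
    (h : ∀ p q, |N p q| ≤ 1) : |N.det| ≤ m.factorial := by
  rw [Matrix.det_apply]
  calc |∑ σ : Equiv.Perm (Fin m), Equiv.Perm.sign σ • ∏ i, N (σ i) i|
      ≤ ∑ σ : Equiv.Perm (Fin m), |Equiv.Perm.sign σ • ∏ i, N (σ i) i| :=
        Finset.abs_sum_le_sum_abs _ _
    _ ≤ ∑ _σ : Equiv.Perm (Fin m), 1 := by
        apply Finset.sum_le_sum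
        intro σ _
        have hb : |∏ i, N (σ i) i| ≤ 1 := by
          calc |∏ i, N (σ i) i| = ∏ i, |N (σ i) i| := by rw [Finset.abs_prod]
              _ ≤ ∏ _i : Fin m, 1 := Finset.prod_le_prod (fun _ _ => abs_nonneg _) (fun i _ => h _ _)
              _ = 1 := by simp
        rcases Int.units_eq_one_or (Equiv.Perm.sign σ) with hs | hs <;> rw [hs] <;>
          simpa using hb
    _ = m.factorial := by simp [Finset.card_univ, Fintype.card_perm]

lemma map_orderEmbOfFin {n m : ℕ} (S : Finset (Fin n)) (hS : S.card = m) :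
    Finset.univ.map (S.orderEmbOfFin hS).toEmbedding = S := by
  apply Finset.eq_of_subset_of_card_le
  · intro i hi
    simp only [Finset.mem_map] at hi
    obtain ⟨q, _, rfl⟩ := hi
    exact Finset.orderEmbOfFin_mem S hS q
  · simp [hS]

lemma prod_orderEmbOfFin {n m : ℕ} (S : Finset (Fin n)) (hS : S.card = m) (g : Fin n → ℝ) :
    ∏ q : Fin m, g (S.orderEmbOfFin hS q) = ∏ i ∈ S, g i := by
  conv_rhs => rw [← map_orderEmbOfFin S hS]
  rw [Finset.prod_map]
  rfl

lemma sum_orderEmbOfFin {n m : ℕ} (S : Finset (Fin n)) (hS : S.card = m) (g : Fin n → ℝ) :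
    ∑ q : Fin m, g (S.orderEmbOfFin hS q) = ∑ i ∈ S, g i := by
  conv_rhs => rw [← map_orderEmbOfFin S hS]
  rw [Finset.sum_map]
  rfl


lemma vertex_aux {m n : ℕ} (M : Matrix (Fin m) (Fin n) ℝ) (a ℓ : Fin n → ℝ) (y : Fin m → ℝ) :
    ∀ (c : ℕ) (x : Fin n → ℝ), (∀ i, x i ∈ Set.Icc (a i) (a i + ℓ i)) → M.mulVec x = y →
    (Finset.univ.filter (fun i => x i ≠ a i ∧ x i ≠ a i + ℓ i)).card ≤ c →
    ∃ x', (∀ i, x' i ∈ Set.Icc (a i) (a i + ℓ i)) ∧ M.mulVec x' = y ∧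
      (Finset.univ.filter (fun i => x' i ≠ a i ∧ x' i ≠ a i + ℓ i)).card ≤ m := by
  intro c
  induction c with
  | zero =>
    intro x hx hMx hc
    exact ⟨x, hx, hMx, le_trans hc (Nat.zero_le m)⟩
  | succ c ih =>
    intro x hx hMx hc
    set F : Finset (Fin n) := Finset.univ.filter (fun i => x i ≠ a i ∧ x i ≠ a i + ℓ i) with hF
    by_cases hli : LinearIndependent ℝ (fun (i : {i // i ∈ F}) => (fun j => M j i.1 : Fin m → ℝ))
    · refine ⟨x, hx, hMx, ?_⟩
      have h1 := hli.fintype_card_le_finrank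
      rw [Fintype.card_coe, Module.finrank_fin_fun] at h1
      exact h1
    · -- get a dependency w supported on F
      obtain ⟨g, hg0, i₁, hgi₁⟩ := Fintype.not_linearIndependent_iff.mp hli
      set w : Fin n → ℝ := fun i => if h : i ∈ F then g ⟨i, h⟩ else 0 with hw
      have hwF : ∀ i, w i ≠ 0 → i ∈ F := by
        intro i hwi
        by_contra h
        simp [hw, h] at hwi
      have hMw : M.mulVec w = 0 := by
        funext j
        have h2 := congrFun hg0 j
        simp only [Finset.sum_apply, Pi.smul_apply, smul_eq_mul, Pi.zero_apply] at h2
        have : M.mulVec w j = ∑ i ∈ F, M j i * w i := by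
          rw [Matrix.mulVec, dotProduct]
          symm
          apply Finset.sum_subset (Finset.subset_univ F)
          intro i _ hiF
          simp [hw, hiF]
        rw [Pi.zero_apply, this, ← Finset.sum_attach F (fun i => M j i * w i), ← h2]
        apply Finset.sum_congr rfl
        intro i _
        simp [hw, i.2, mul_comm]
      -- the free interior facts
      have hfree : ∀ i ∈ F, a i < x i ∧ x i < a i + ℓ i := by
        intro i hi
        rw [hF, Finset.mem_filter] at hi
        obtain ⟨_, h1, h2⟩ := hi
        exact ⟨lt_of_le_of_ne (hx i).1 (Ne.symm h1), lt_of_le_of_ne (hx i).2 h2⟩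
      set T : Finset (Fin n) := F.filter (fun i => w i ≠ 0) with hT
      have hTne : T.Nonempty := by
        refine ⟨i₁.1, ?_⟩
        rw [hT, Finset.mem_filter]
        refine ⟨i₁.2, ?_⟩
        simpa [hw, i₁.2] using hgi₁
      set t : Fin n → ℝ := fun i => if 0 < w i then (a i + ℓ i - x i) / w i else (a i - x i) / w i
        with htdef
      have htpos : ∀ i ∈ T, 0 < t i := by
        intro i hi
        rw [hT, Finset.mem_filter] at hi
        obtain ⟨hiF, hwi⟩ := hi
        obtain ⟨hl, hr⟩ := hfree i hiF
        by_cases hs : 0 < w i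
        · simp only [htdef, if_pos hs]
          exact div_pos (by linarith) hs
        · simp only [htdef, if_neg hs]
          have : w i < 0 := lt_of_le_of_ne (not_lt.mp hs) hwi
          exact div_pos_of_neg_of_neg (by linarith) this
      set t0 : ℝ := T.inf' hTne t with ht0
      have ht0pos : 0 < t0 := by
        rw [ht0, Finset.lt_inf'_iff]
        exact htpos
      obtain ⟨i₀, hi₀T, hti₀⟩ := Finset.exists_mem_eq_inf' hTne t
      have ht0le : ∀ i ∈ T, t0 ≤ t i := fun i hi => Finset.inf'_le t hi
      set x'' : Fin n → ℝ := fun i => x i + t0 * w i with hx''def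
      have key : ∀ i, w i ≠ 0 → (0 < w i → x i + t i * w i = a i + ℓ i) ∧
          (w i < 0 → x i + t i * w i = a i) := by
        intro i hwi
        constructor
        · intro hs
          simp only [htdef, if_pos hs]
          field_simp
          ring
        · intro hs
          simp only [htdef, if_neg (not_lt.mpr hs.le)]
          field_simp
          ring
      have hx'' : ∀ i, x'' i ∈ Set.Icc (a i) (a i + ℓ i) := by
        intro i
        by_cases hwi : w i = 0
        · simpa [hx''def, hwi] using hx i
        · have hiT : i ∈ T := by
            rw [hT, Finset.mem_filter]; exact ⟨hwF i hwi, hwi⟩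
          have hle := ht0le i hiT
          obtain ⟨hl, hr⟩ := hfree i (hwF i hwi)
          rcases lt_or_gt_of_ne hwi with hneg | hpos
          · have h1 : x i + t i * w i = a i := (key i hwi).2 hneg
            constructor
            · have : t i * w i ≤ t0 * w i := mul_le_mul_of_nonpos_right hle hneg.le
              simp only [hx''def]; nlinarith
            · have : t0 * w i ≤ 0 := mul_nonpos_of_nonneg_of_nonpos ht0pos.le hneg.le
              simp only [hx''def]; nlinarith
          · have h1 : x i + t i * w i = a i + ℓ i := (key i hwi).1 hpos
            constructor
            · have : 0 ≤ t0 * w i := mul_nonneg ht0pos.le hpos.le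
              simp only [hx''def]; nlinarith
            · have : t0 * w i ≤ t i * w i := mul_le_mul_of_nonneg_right hle hpos.le
              simp only [hx''def]; nlinarith
      have hMx'' : M.mulVec x'' = y := by
        have hxw : x'' = x + t0 • w := by funext i; rfl
        rw [hxw, Matrix.mulVec_add, Matrix.mulVec_smul, hMw, hMx]
        simp
      have hi₀tight : ¬ (x'' i₀ ≠ a i₀ ∧ x'' i₀ ≠ a i₀ + ℓ i₀) := by
        have hwi₀ : w i₀ ≠ 0 := (Finset.mem_filter.mp hi₀T).2
        have ht0i : t0 = t i₀ := by rw [ht0, hti₀]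
        rcases lt_or_gt_of_ne hwi₀ with hneg | hpos
        · have : x'' i₀ = a i₀ := by
            show x i₀ + t0 * w i₀ = a i₀
            rw [ht0i]; exact (key i₀ hwi₀).2 hneg
          intro hcon; exact hcon.1 this
        · have : x'' i₀ = a i₀ + ℓ i₀ := by
            show x i₀ + t0 * w i₀ = a i₀ + ℓ i₀
            rw [ht0i]; exact (key i₀ hwi₀).1 hpos
          intro hcon; exact hcon.2 this
      have hsub : (Finset.univ.filter (fun i => x'' i ≠ a i ∧ x'' i ≠ a i + ℓ i)) ⊆ F.erase i₀ := by
        intro i hi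
        rw [Finset.mem_filter] at hi
        obtain ⟨_, hi⟩ := hi
        rw [Finset.mem_erase]
        constructor
        · rintro rfl; exact hi₀tight hi
        · by_contra hiF
          have hwi : w i = 0 := by
            by_contra hwi; exact hiF (hwF i hwi)
          rw [hx''def] at hi
          simp only [hwi, mul_zero, add_zero] at hi
          exact hiF (Finset.mem_filter.mpr ⟨Finset.mem_univ i, hi⟩)
      have hcard : (Finset.univ.filter (fun i => x'' i ≠ a i ∧ x'' i ≠ a i + ℓ i)).card ≤ c := by
        have h1 := Finset.card_le_card hsub
        have h2 : (F.erase i₀).card = F.card - 1 :=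
          Finset.card_erase_of_mem (Finset.mem_filter.mp hi₀T).1
        have h3 : 1 ≤ F.card := Finset.card_pos.mpr ⟨i₀, (Finset.mem_filter.mp hi₀T).1⟩
        omega
      exact ih x'' hx'' hMx'' hcard


lemma measure_piece {m : ℕ} (N : Matrix (Fin m) (Fin m) ℝ) (c lo hi : Fin m → ℝ) :
    volume ((fun w => c + Matrix.toLin' N w) '' Set.Icc lo hi)
      = ENNReal.ofReal |N.det| * volume (Set.Icc lo hi) := by
  have h1 : (fun w => c + Matrix.toLin' N w) '' Set.Icc lo hi
      = c +ᵥ (Matrix.toLin' N '' Set.Icc lo hi) := by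
    rw [← Set.image_vadd, Set.image_image]
    rfl
  rw [h1, measure_vadd, Measure.addHaar_image_linearMap, LinearMap.det_toLin']

end helpers


/-- For products of rectangular (indicator-type) functions and an invertible
{-1,0,1} matrix `A`, the integral over `y` of the supremum over `z` of `f (A⁻¹ (y,z))`
is at most `2^k · (n-k)! · ∏ φᵢ · Σ_I ∏_{i∉I} ℓᵢ`. -/
theorem rectangular_functions_integral_bound
    (n k : ℕ) (hk1 : 1 ≤ k) (hkn : k < n)
    (φ ℓ a : Fin n → ℝ) (hφ : ∀ i, 0 ≤ φ i) (hℓ : ∀ i, 0 ≤ ℓ i)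
    (f : Fin n → ℝ → ℝ)
    (hf : ∀ i x, f i x = if x ∈ Set.Icc (a i) (a i + ℓ i) then φ i else 0)
    (A : Matrix (Fin n) (Fin n) ℝ)
    (hA : ∀ i j, A i j = -1 ∨ A i j = 0 ∨ A i j = 1)
    (hinv : IsUnit A.det) :
    (∫ y : Fin (n - k) → ℝ,
        ⨆ z : Fin k → ℝ, ∏ i, f i (A⁻¹.mulVec
          (fun i' => Fin.append y z (Fin.cast (Nat.sub_add_cancel hkn.le).symm i')) i))
      ≤ 2 ^ k * (Nat.factorial (n - k)) * (∏ i, φ i) *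
        ∑ I ∈ Finset.powersetCard k (Finset.univ : Finset (Fin n)),
          ∏ i ∈ Finset.univ \ I, ℓ i := by
  classical
  -- abbreviations
  have hmk : n - k + k = n := Nat.sub_add_cancel hkn.le
  set m : ℕ := n - k with hmdef
  have hmn : m ≤ n := Nat.sub_le n k
  have hkm : n - m = k := by omega
  -- row-selected matrix
  set ι : Fin m → Fin n := fun j => Fin.cast hmk (Fin.castAdd k j) with hι
  set M : Matrix (Fin m) (Fin n) ℝ := Matrix.of (fun j i => A (ι j) i) with hM
  -- index type of candidate coordinate sets
  set 𝒮 := {S : Finset (Fin n) // S.card = m}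
  -- the pieces
  set Nm : ∀ S : 𝒮, Matrix (Fin m) (Fin m) ℝ :=
    fun S => Matrix.of (fun p q => M p (S.1.orderEmbOfFin S.2 q)) with hNm
  set cv : ∀ S : 𝒮, ({i // i ∈ Finset.univ \ S.1} → Bool) → (Fin m → ℝ) :=
    fun S ε => (fun j => ∑ i ∈ (Finset.univ \ S.1).attach,
      (if ε i then a i.1 + ℓ i.1 else a i.1) * M j i.1) with hcv
  set piece : ∀ S : 𝒮, ({i // i ∈ Finset.univ \ S.1} → Bool) → Set (Fin m → ℝ) :=
    fun S ε => (fun w => cv S ε + Matrix.toLin' (Nm S) w) ''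
      Set.Icc (fun q => a (S.1.orderEmbOfFin S.2 q))
              (fun q => a (S.1.orderEmbOfFin S.2 q) + ℓ (S.1.orderEmbOfFin S.2 q)) with hpiece
  set V : Set (Fin m → ℝ) := ⋃ (S : 𝒮), ⋃ (ε : {i // i ∈ Finset.univ \ S.1} → Bool), piece S ε
    with hV
  -- compactness and measurability
  have hcomp : ∀ (S : 𝒮) ε, IsCompact (piece S ε) := by
    intro S ε
    apply IsCompact.image isCompact_Icc
    exact continuous_const.add (Matrix.toLin' (Nm S)).continuous_of_finiteDimensional
  have hVmeas : MeasurableSet V := by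
    apply MeasurableSet.iUnion; intro S
    apply MeasurableSet.iUnion; intro ε
    exact (hcomp S ε).isClosed.measurableSet
  -- entries of Nm are at most 1 in absolute value
  have hdet : ∀ S : 𝒮, |(Nm S).det| ≤ (m.factorial : ℝ) := by
    intro S
    apply abs_det_le_factorial
    intro p q
    rcases hA (ι p) (S.1.orderEmbOfFin S.2 q) with h | h | h <;>
      simp [hNm, hM, h]
  -- measure of each piece
  have hpm : ∀ (S : 𝒮) ε, volume (piece S ε)
      ≤ ENNReal.ofReal ((m.factorial : ℝ) * ∏ i ∈ S.1, ℓ i) := by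
    intro S ε
    rw [hpiece]
    simp only
    rw [measure_piece, Real.volume_Icc_pi]
    have h1 : ∀ q : Fin m, (a (S.1.orderEmbOfFin S.2 q) + ℓ (S.1.orderEmbOfFin S.2 q))
        - a (S.1.orderEmbOfFin S.2 q) = ℓ (S.1.orderEmbOfFin S.2 q) := fun q => by ring
    simp only [h1]
    rw [← ENNReal.ofReal_prod_of_nonneg (fun q _ => hℓ _), prod_orderEmbOfFin S.1 S.2 ℓ,
      ← ENNReal.ofReal_mul (abs_nonneg _)]
    apply ENNReal.ofReal_le_ofReal
    apply mul_le_mul_of_nonneg_right (hdet S)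
    exact Finset.prod_nonneg (fun i _ => hℓ i)
  -- counting the ε's
  have hcard : ∀ S : 𝒮, Fintype.card ({i // i ∈ Finset.univ \ S.1} → Bool) = 2 ^ k := by
    intro S
    simp only [Fintype.card_fun, Fintype.card_bool, Fintype.card_coe, Finset.card_univ_diff,
      S.2, Fintype.card_fin]
    rw [hkm]
  -- the measure bound for V
  have hVle : volume V ≤ ENNReal.ofReal ((2:ℝ) ^ k * (m.factorial : ℝ) *
      ∑ S ∈ Finset.powersetCard m (Finset.univ : Finset (Fin n)), ∏ i ∈ S, ℓ i) := by
    have h1 : volume V ≤ ∑ S : 𝒮, ∑ ε : {i // i ∈ Finset.univ \ S.1} → Bool,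
        volume (piece S ε) := by
      rw [hV]
      refine le_trans (measure_iUnion_le _) ?_
      rw [tsum_fintype]
      apply Finset.sum_le_sum
      intro S _
      refine le_trans (measure_iUnion_le _) ?_
      rw [tsum_fintype]
    have h2 : ∀ S : 𝒮, ∑ ε : {i // i ∈ Finset.univ \ S.1} → Bool, volume (piece S ε)
        ≤ ENNReal.ofReal ((2:ℝ)^k * ((m.factorial : ℝ) * ∏ i ∈ S.1, ℓ i)) := by
      intro S
      calc ∑ ε : {i // i ∈ Finset.univ \ S.1} → Bool, volume (piece S ε)
          ≤ ∑ _ε : {i // i ∈ Finset.univ \ S.1} → Bool,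
              ENNReal.ofReal ((m.factorial : ℝ) * ∏ i ∈ S.1, ℓ i) :=
            Finset.sum_le_sum (fun ε _ => hpm S ε)
        _ = (2^k : ℕ) • ENNReal.ofReal ((m.factorial : ℝ) * ∏ i ∈ S.1, ℓ i) := by
            rw [Finset.sum_const, Finset.card_univ]
            congr 1
            convert hcard S using 2
        _ = ENNReal.ofReal ((2:ℝ)^k * ((m.factorial : ℝ) * ∏ i ∈ S.1, ℓ i)) := by
            rw [nsmul_eq_mul, ← ENNReal.ofReal_natCast (2^k),
              ← ENNReal.ofReal_mul (by positivity)]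
            norm_num
    refine le_trans h1 (le_trans (Finset.sum_le_sum (fun S _ => h2 S)) ?_)
    have h3 : ∑ S : 𝒮, ENNReal.ofReal ((2:ℝ)^k * ((m.factorial : ℝ) * ∏ i ∈ S.1, ℓ i))
        = ENNReal.ofReal (∑ S : 𝒮, (2:ℝ)^k * ((m.factorial : ℝ) * ∏ i ∈ S.1, ℓ i)) := by
      rw [ENNReal.ofReal_sum_of_nonneg]
      intro S _
      have := Finset.prod_nonneg (fun i (_ : i ∈ S.1) => hℓ i)
      positivity
    rw [h3]
    apply ENNReal.ofReal_le_ofReal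
    have h4 : ∑ S : 𝒮, (2:ℝ)^k * ((m.factorial : ℝ) * ∏ i ∈ S.1, ℓ i)
        = ∑ S ∈ Finset.powersetCard m (Finset.univ : Finset (Fin n)),
            (2:ℝ)^k * ((m.factorial : ℝ) * ∏ i ∈ S, ℓ i) := by
      exact (Finset.sum_subtype
        (Finset.powersetCard m (Finset.univ : Finset (Fin n)))
        (fun S => Finset.mem_powersetCard_univ)
        (fun S => (2:ℝ)^k * ((m.factorial : ℝ) * ∏ i ∈ S, ℓ i))).symm
    rw [h4, ← Finset.mul_sum, ← Finset.mul_sum, ← mul_assoc]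
  -- membership: any box point mapping to y certifies y ∈ V
  have hmem : ∀ (y : Fin m → ℝ) (x : Fin n → ℝ),
      (∀ i, x i ∈ Set.Icc (a i) (a i + ℓ i)) → M.mulVec x = y → y ∈ V := by
    intro y x hx hMx
    obtain ⟨x', hx', hMx', hcd⟩ := vertex_aux M a ℓ y n x hx hMx
      (le_trans (Finset.card_filter_le _ _) (by simp))
    obtain ⟨S, hFS, -, hScard⟩ := Finset.exists_subsuperset_card_eq
      (Finset.subset_univ (Finset.univ.filter (fun i => x' i ≠ a i ∧ x' i ≠ a i + ℓ i)))
      hcd (by simp [hmn])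
    set Sσ : 𝒮 := ⟨S, hScard⟩ with hSσ
    set ε : {i // i ∈ Finset.univ \ S} → Bool :=
      fun i => decide (x' i.1 = a i.1 + ℓ i.1) with hε
    rw [hV]
    apply Set.mem_iUnion.mpr
    refine ⟨Sσ, Set.mem_iUnion.mpr ⟨ε, ?_⟩⟩
    rw [hpiece]
    refine ⟨fun q => x' (S.orderEmbOfFin hScard q), ?_, ?_⟩
    · rw [Set.mem_Icc]
      constructor <;> intro q
      · exact (hx' (S.orderEmbOfFin hScard q)).1
      · exact (hx' (S.orderEmbOfFin hScard q)).2
    · funext j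
      have hNv : Matrix.toLin' (Nm Sσ) (fun q => x' (S.orderEmbOfFin hScard q)) j
          = ∑ i ∈ S, M j i * x' i := by
        rw [Matrix.toLin'_apply]
        show ∑ q : Fin m, Nm Sσ j q * x' (S.orderEmbOfFin hScard q) = _
        rw [← sum_orderEmbOfFin S hScard (fun i => M j i * x' i)]
        rfl
      have hcvj : cv Sσ ε j = ∑ i ∈ Finset.univ \ S, M j i * x' i := by
        rw [hcv]
        show ∑ i ∈ (Finset.univ \ (Sσ:Finset (Fin n))).attach,
          (if ε i then a i.1 + ℓ i.1 else a i.1) * M j i.1 = _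
        rw [← Finset.sum_attach (Finset.univ \ S) (fun i => M j i * x' i)]
        apply Finset.sum_congr rfl
        intro i _
        have hiS : i.1 ∉ S := (Finset.mem_sdiff.mp i.2).2
        have hiF : ¬ (x' i.1 ≠ a i.1 ∧ x' i.1 ≠ a i.1 + ℓ i.1) := by
          intro hcon
          exact hiS (hFS (Finset.mem_filter.mpr ⟨Finset.mem_univ _, hcon⟩))
        by_cases hc : x' i.1 = a i.1 + ℓ i.1
        · have hεt : ε i = true := by rw [hε]; exact decide_eq_true hc
          rw [hεt, if_pos rfl, ← hc]
          ring
        · have hεf : ε i = false := by rw [hε]; simpa using hc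
          have hxa : x' i.1 = a i.1 := by
            by_contra hne
            exact hiF ⟨hne, hc⟩
          rw [hεf, if_neg (by simp), hxa]
          ring
      show cv Sσ ε j + Matrix.toLin' (Nm Sσ) _ j = y j
      rw [hNv, hcvj, Finset.sum_sdiff (Finset.subset_univ S)]
      rw [← hMx']
      rfl
  -- pointwise bound of the sup by the indicator
  set g : (Fin m → ℝ) → ℝ := fun y =>
    ⨆ z : Fin k → ℝ, ∏ i, f i (A⁻¹.mulVec
      (fun i' => Fin.append y z (Fin.cast hmk.symm i')) i) with hg
  set h : (Fin m → ℝ) → ℝ := Set.indicator V (fun _ => ∏ i, φ i) with hh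
  have hle : ∀ y, g y ≤ h y := by
    intro y
    rw [hg]
    apply ciSup_le
    intro z
    set x : Fin n → ℝ := A⁻¹.mulVec
      (fun i' => Fin.append y z (Fin.cast (Nat.sub_add_cancel hkn.le).symm i')) with hxdef
    by_cases hxB : ∀ i, x i ∈ Set.Icc (a i) (a i + ℓ i)
    · have hprod : ∏ i, f i (x i) = ∏ i, φ i :=
        Finset.prod_congr rfl fun i _ => by rw [hf]; exact if_pos (hxB i)
      have hyV : y ∈ V := by
        apply hmem y x hxB
        funext j
        have h1 : M.mulVec x j = A.mulVec x (ι j) := rfl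
        have h2 : A.mulVec x
            = (fun i' => Fin.append y z (Fin.cast (Nat.sub_add_cancel hkn.le).symm i')) := by
          rw [hxdef, Matrix.mulVec_mulVec, Matrix.mul_nonsing_inv A hinv, Matrix.one_mulVec]
        rw [h1, h2]
        show Fin.append y z (Fin.cast (Nat.sub_add_cancel hkn.le).symm (ι j)) = y j
        have h3 : Fin.cast (Nat.sub_add_cancel hkn.le).symm (ι j) = Fin.castAdd k j := by
          ext; simp [hι]
        rw [h3, Fin.append_left]
      rw [hh, Set.indicator_of_mem hyV]
      exact le_of_eq hprod
    · push_neg at hxB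
      obtain ⟨i0, hi0⟩ := hxB
      have hz : ∏ i, f i (x i) = 0 :=
        Finset.prod_eq_zero (Finset.mem_univ i0) (by rw [hf]; exact if_neg hi0)
      have hind : (0:ℝ) ≤ h y :=
        Set.indicator_nonneg (fun _ _ => Finset.prod_nonneg fun i _ => hφ i) y
      exact le_trans (le_of_eq hz) hind
  -- RHS nonneg
  have hRHS0 : (0:ℝ) ≤ 2 ^ k * (Nat.factorial (n - k)) * (∏ i, φ i) *
      ∑ I ∈ Finset.powersetCard k (Finset.univ : Finset (Fin n)),
        ∏ i ∈ Finset.univ \ I, ℓ i := by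
    apply mul_nonneg (mul_nonneg (mul_nonneg (by positivity) (by positivity))
      (Finset.prod_nonneg fun i _ => hφ i))
    exact Finset.sum_nonneg fun I _ => Finset.prod_nonneg fun i _ => hℓ i
  -- reindexing the sum
  have hsum : ∑ S ∈ Finset.powersetCard m (Finset.univ : Finset (Fin n)), ∏ i ∈ S, ℓ i
      = ∑ I ∈ Finset.powersetCard k (Finset.univ : Finset (Fin n)),
          ∏ i ∈ Finset.univ \ I, ℓ i := by
    apply Finset.sum_nbij' (i := fun S => Finset.univ \ S) (j := fun I => Finset.univ \ I)
    · intro S hS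
      rw [Finset.mem_powersetCard_univ] at hS ⊢
      rw [Finset.card_univ_diff, hS, Fintype.card_fin, hkm]
    · intro I hI
      rw [Finset.mem_powersetCard_univ] at hI ⊢
      rw [Finset.card_univ_diff, hI, Fintype.card_fin]
    · intro S _
      rw [Finset.sdiff_sdiff_self_left, Finset.univ_inter]
    · intro I _
      rw [Finset.sdiff_sdiff_self_left, Finset.univ_inter]
    · intro S _
      congr 1
      rw [Finset.sdiff_sdiff_self_left, Finset.univ_inter]
  -- now the integral
  by_cases hint : Integrable g
  · have hVfin : volume V < ⊤ := lt_of_le_of_lt hVle ENNReal.ofReal_lt_top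
    have hinth : Integrable h := by
      rw [hh, integrable_indicator_iff hVmeas]
      exact integrableOn_const hVfin.ne
    calc ∫ y, g y ≤ ∫ y, h y := integral_mono hint hinth hle
      _ = (volume V).toReal • (∏ i, φ i) := by
          rw [hh]; exact integral_indicator_const _ hVmeas
      _ ≤ ((2:ℝ) ^ k * (m.factorial : ℝ) *
            ∑ S ∈ Finset.powersetCard m (Finset.univ : Finset (Fin n)), ∏ i ∈ S, ℓ i)
            * (∏ i, φ i) := by
          apply mul_le_mul_of_nonneg_right _ (Finset.prod_nonneg fun i _ => hφ i)
          apply ENNReal.toReal_le_of_le_ofReal _ hVle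
          apply mul_nonneg (by positivity)
          exact Finset.sum_nonneg fun S _ => Finset.prod_nonneg fun i _ => hℓ i
      _ = 2 ^ k * (Nat.factorial (n - k)) * (∏ i, φ i) *
            ∑ I ∈ Finset.powersetCard k (Finset.univ : Finset (Fin n)),
              ∏ i ∈ Finset.univ \ I, ℓ i := by
          rw [hsum]; ring
  · rw [integral_undef hint]
    exact hRHS0
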